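/- Let Γ be a group, G a topological group, and f : Γ → G a map whose defect set D_f is contained in a compact subset of G. Then for every x in the subgroup of G generated by D_f, the conjugacy orbit { f(γ)⁻¹ x f(γ) : γ ∈ Γ } is contained in a compact subset of G. -/

import Mathlib

open Pointwise


/-- The defect set of a map `f : Γ → G`:
`D_f = { f(y)⁻¹ f(x)⁻¹ f(xy) : x, y ∈ Γ }`. -/
def defectSet {Γ G : Type*} [Group Γ] [Group G] (f : Γ → G) : Set G :=
  {d | ∃ x y : Γ, d = (f y)⁻¹ * (f x)⁻¹ * f (x * y)}

/-- If the defect set of `f : Γ → G` is bounded, then every element `x` of the group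
generated by the defect set has bounded conjugacy orbit under `f(Γ)`. -/
theorem bounded_orbit_of_defect_group {Γ G : Type*} [Group Γ] [Group G]
    [TopologicalSpace G] [IsTopologicalGroup G] (f : Γ → G)
    (hq : ∃ K : Set G, IsCompact K ∧ defectSet f ⊆ K)
    (x : G) (hx : x ∈ Subgroup.closure (defectSet f)) :
    ∃ K : Set G, IsCompact K ∧ ∀ γ : Γ, (f γ)⁻¹ * x * f γ ∈ K := by
  obtain ⟨K, hKc, hKD⟩ := hq
  induction hx using Subgroup.closure_induction with
  | mem d hd =>
    refine ⟨K * K * K⁻¹, ((hKc.mul hKc).mul hKc.inv), fun γ => ?_⟩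
    obtain ⟨a, b, rfl⟩ := hd
    have h1 : (f γ)⁻¹ * (f (a * b))⁻¹ * f (a * b * γ) ∈ K := hKD ⟨a * b, γ, rfl⟩
    have h2 : (f γ)⁻¹ * (f b)⁻¹ * f (b * γ) ∈ K := hKD ⟨b, γ, rfl⟩
    have h3 : (f (b * γ))⁻¹ * (f a)⁻¹ * f (a * (b * γ)) ∈ K := hKD ⟨a, b * γ, rfl⟩
    have key : (f γ)⁻¹ * ((f b)⁻¹ * (f a)⁻¹ * f (a * b)) * f γ =
        ((f γ)⁻¹ * (f b)⁻¹ * f (b * γ)) * ((f (b * γ))⁻¹ * (f a)⁻¹ * f (a * (b * γ))) *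
        ((f γ)⁻¹ * (f (a * b))⁻¹ * f (a * b * γ))⁻¹ := by
      rw [mul_assoc a b γ]
      group
    rw [key]
    exact Set.mul_mem_mul (Set.mul_mem_mul h2 h3) (Set.inv_mem_inv.mpr h1)
  | one =>
    exact ⟨{1}, isCompact_singleton, fun γ => by simp⟩
  | mul a b _ _ iha ihb =>
    obtain ⟨K1, h1c, h1⟩ := iha
    obtain ⟨K2, h2c, h2⟩ := ihb
    refine ⟨K1 * K2, h1c.mul h2c, fun γ => ?_⟩
    have : (f γ)⁻¹ * (a * b) * f γ = ((f γ)⁻¹ * a * f γ) * ((f γ)⁻¹ * b * f γ) := by group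
    rw [this]
    exact Set.mul_mem_mul (h1 γ) (h2 γ)
  | inv a _ iha =>
    obtain ⟨K1, h1c, h1⟩ := iha
    refine ⟨K1⁻¹, h1c.inv, fun γ => ?_⟩
    have : (f γ)⁻¹ * a⁻¹ * f γ = ((f γ)⁻¹ * a * f γ)⁻¹ := by group
    rw [this]
    exact Set.inv_mem_inv.mpr (h1 γ)
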